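/- Let f be a bounded measurable function on [0,∞) with f > ε almost everywhere and |f(r) − 1| ≤ J e^{−ar} almost everywhere for some a > 2 and J > 0. If λ solves λ' + λ² = f with λ(0) > 0, then λ is positive and there exists C > 0 such that |λ(r) − 1| ≤ C e^{−2r} for all r > 0. -/

import Mathlib

open MeasureTheory Real Set

lemma expInt (k s r : ℝ) (hk : 0 < k) :
    ∫ t in s..r, Real.exp (-(k * t)) = (Real.exp (-(k * s)) - Real.exp (-(k * r))) / k := by
  have h : ∀ t ∈ uIcc s r, HasDerivAt (fun t => -(Real.exp (-(k * t)) / k)) (Real.exp (-(k * t))) t := by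
    intro t _
    have h1 : HasDerivAt (fun t => -(k * t)) (-k) t := by
      simpa using ((hasDerivAt_id t).const_mul k).fun_neg
    have h2 := ((h1.exp).div_const k).fun_neg
    refine h2.congr_deriv ?_
    field_simp
  rw [intervalIntegral.integral_eq_sub_of_hasDerivAt h
    ((Real.continuous_exp.comp (by continuity)).intervalIntegrable s r)]
  field_simp
  ring

set_option maxHeartbeats 1000000 in
theorem riccati_decay_a_gt_two
    (a J ε : ℝ) (ha : 2 < a) (hJ : 0 < J) (hε : 0 < ε)
    (f lam : ℝ → ℝ)
    (hf_meas : Measurable f)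
    (hf_bdd : ∃ M : ℝ, ∀ r ≥ (0:ℝ), |f r| ≤ M)
    (hf_pos : ∀ᵐ r ∂(volume.restrict (Ici (0:ℝ))), ε < f r)
    (hf_close : ∀ᵐ r ∂(volume.restrict (Ici (0:ℝ))), |f r - 1| ≤ J * exp (-a * r))
    (hlam : ∀ r ≥ (0:ℝ), HasDerivAt lam (f r - lam r ^ 2) r)
    (h0 : 0 < lam 0) :
    (∀ r ≥ (0:ℝ), 0 < lam r) ∧
      ∃ C > 0, ∀ r > (0:ℝ), |lam r - 1| ≤ C * exp (-2 * r) := by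
  obtain ⟨M, hM⟩ := hf_bdd
  have hcont : ∀ r ∈ Ici (0:ℝ), ContinuousAt lam r := fun r hr => (hlam r hr).continuousAt
  set lamE : ℝ → ℝ := fun t => lam (max t 0) with hlamE_def
  have hlamEc : Continuous lamE := by
    rw [continuous_iff_continuousAt]
    intro t
    exact (hcont (max t 0) (mem_Ici.2 (le_max_right t 0))).comp (f := fun t => max t 0) ((continuous_id.max continuous_const).continuousAt)
  have hlamE_eq : ∀ t : ℝ, 0 ≤ t → lamE t = lam t := by
    intro t ht; simp [hlamE_def, max_eq_left ht]
  have hfint : ∀ s r : ℝ, 0 ≤ s → s ≤ r → IntervalIntegrable f volume s r := by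
    intro s r hs hsr
    rw [intervalIntegrable_iff_integrableOn_Ioc_of_le hsr]
    refine Integrable.mono' (integrable_const M) hf_meas.aestronglyMeasurable.restrict ?_
    refine (ae_restrict_iff' measurableSet_Ioc).2 (ae_of_all _ fun t ht => ?_)
    exact hM t (hs.trans ht.1.le)
  set Y : ℝ → ℝ := fun r => ∫ t in (0:ℝ)..r, lamE t with hY_def
  have hY : ∀ r : ℝ, HasDerivAt Y (lamE r) r := fun r =>
    intervalIntegral.integral_hasDerivAt_right (hlamEc.intervalIntegrable 0 r)
      hlamEc.aestronglyMeasurable.stronglyMeasurableAtFilter hlamEc.continuousAt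
  -- positivity
  have hpos : ∀ r ≥ (0:ℝ), 0 < lam r := by
    intro r hr
    have hy : ∀ t, HasDerivAt (fun t => Real.exp (Y t)) (lamE t * Real.exp (Y t)) t := by
      intro t; simpa [mul_comm] using (hY t).exp
    have hz : ∀ t ∈ uIcc 0 r, HasDerivAt (fun t => lam t * Real.exp (Y t))
        (f t * Real.exp (Y t)) t := by
      intro t ht
      rw [uIcc_of_le hr] at ht
      have h1 := (hlam t ht.1).fun_mul (hy t)
      refine h1.congr_deriv ?_
      rw [hlamE_eq t ht.1]; ring
    have hint : IntervalIntegrable (fun t => f t * Real.exp (Y t)) volume 0 r :=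
      (hfint 0 r le_rfl hr).mul_continuousOn
        (Real.continuous_exp.comp (continuous_iff_continuousAt.2
          fun t => (hY t).continuousAt)).continuousOn
    have hftc := intervalIntegral.integral_eq_sub_of_hasDerivAt hz hint
    have hnn : 0 ≤ ∫ t in (0:ℝ)..r, f t * Real.exp (Y t) := by
      apply intervalIntegral.integral_nonneg_of_ae_restrict hr
      have h2 : ∀ᵐ t ∂(volume.restrict (Icc (0:ℝ) r)), ε < f t :=
        ae_restrict_of_ae_restrict_of_subset (Icc_subset_Ici_self) hf_pos
      filter_upwards [h2] with t ht
      exact mul_nonneg (le_of_lt (hε.trans ht)) (Real.exp_pos _).le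
    have hY0 : Y 0 = 0 := by simp [hY_def]
    rw [hftc, hY0] at hnn
    simp only [Real.exp_zero, mul_one] at hnn
    nlinarith [Real.exp_pos (Y r)]
  -- uniform lower bound
  have hsqrt : 0 < Real.sqrt ε := Real.sqrt_pos.2 hε
  set m := min (lam 0) (Real.sqrt ε) with hm_def
  have hm0 : 0 < m := lt_min h0 hsqrt
  have hm2 : m ^ 2 ≤ ε := by
    have h1 : m ≤ Real.sqrt ε := min_le_right _ _
    nlinarith [Real.sq_sqrt hε.le, hm0]
  have hmlam : ∀ r ≥ (0:ℝ), m ≤ lam r := by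
    intro r hr
    by_contra hcon
    push_neg at hcon
    set S := Icc 0 r ∩ lam ⁻¹' (Ici m) with hS_def
    have h0S : (0:ℝ) ∈ S := ⟨⟨le_rfl, hr⟩, by simp only [mem_preimage, mem_Ici]; exact min_le_left _ _⟩
    have hSb : BddAbove S := ⟨r, fun t ht => ht.1.2⟩
    have hScl : IsClosed S := by
      have hcl : ContinuousOn lam (Icc 0 r) := fun t ht => (hcont t ht.1).continuousWithinAt
      exact hcl.preimage_isClosed_of_isClosed isClosed_Icc isClosed_Ici
    set s := sSup S with hs_def
    have hsS : s ∈ S := hScl.csSup_mem ⟨0, h0S⟩ hSb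
    have hs0 : 0 ≤ s := hsS.1.1
    have hsr : s ≤ r := hsS.1.2
    have hslt : ∀ t, s < t → t ≤ r → lam t < m := by
      intro t hst htr
      by_contra h'
      push_neg at h'
      exact absurd (le_csSup hSb ⟨⟨hs0.trans hst.le, htr⟩, h'⟩) (not_le.2 hst)
    have hd : ∀ t ∈ uIcc s r, HasDerivAt lam (f t - lamE t ^ 2) t := by
      intro t ht
      rw [uIcc_of_le hsr] at ht
      rw [hlamE_eq t (hs0.trans ht.1)]
      exact hlam t (hs0.trans ht.1)
    have hint : IntervalIntegrable (fun t => f t - lamE t ^ 2) volume s r :=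
      (hfint s r hs0 hsr).sub ((hlamEc.pow 2).intervalIntegrable s r)
    have hftc := intervalIntegral.integral_eq_sub_of_hasDerivAt hd hint
    have hnn : 0 ≤ ∫ t in s..r, (f t - lamE t ^ 2) := by
      apply intervalIntegral.integral_nonneg_of_ae_restrict hsr
      have h2 : ∀ᵐ t ∂(volume.restrict (Icc s r)), ε < f t :=
        ae_restrict_of_ae_restrict_of_subset (fun t ht => hs0.trans ht.1) hf_pos
      have h3 : ∀ᵐ t ∂(volume.restrict (Icc s r)), t ≠ s := by
        apply ae_restrict_of_ae
        rw [ae_iff]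
        simpa using measure_singleton (α := ℝ) s
      filter_upwards [h2, h3, ae_restrict_mem measurableSet_Icc] with t ht ht' htm
      have hst : s < t := lt_of_le_of_ne htm.1 (Ne.symm ht')
      have h4 : lam t < m := hslt t hst htm.2
      have h5 : 0 < lam t := hpos t (hs0.trans hst.le)
      rw [hlamE_eq t (hs0.trans hst.le)]
      show (0:ℝ) ≤ f t - lam t ^ 2
      nlinarith
    rw [hftc] at hnn
    have : m ≤ lam s := hsS.2
    linarith
  -- integrating factor
  set G : ℝ → ℝ := fun r => Y r + r with hG_def
  have hG : ∀ r : ℝ, HasDerivAt G (lamE r + 1) r := fun r => (hY r).add (hasDerivAt_id r)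
  have hGcont : Continuous G := continuous_iff_continuousAt.2 fun r => (hG r).continuousAt
  have hG0 : G 0 = 0 := by simp [hG_def, hY_def]
  set E : ℝ → ℝ := fun r => Real.exp (G r) with hE_def
  have hEpos : ∀ r, 0 < E r := fun r => Real.exp_pos _
  have hEc : Continuous E := Real.continuous_exp.comp hGcont
  have hE0 : E 0 = 1 := by rw [hE_def]; simp [hG0]
  have hGsub : ∀ s r : ℝ, G r - G s = ∫ t in s..r, (lamE t + 1) := by
    intro s r
    have h1 : ∀ u v : ℝ, IntervalIntegrable (fun t => lamE t + 1) volume u v := fun u v =>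
      (hlamEc.add continuous_const).intervalIntegrable u v
    have h2 : (∫ t in (0:ℝ)..s, (lamE t + 1)) + ∫ t in s..r, (lamE t + 1)
        = ∫ t in (0:ℝ)..r, (lamE t + 1) :=
      intervalIntegral.integral_add_adjacent_intervals (h1 0 s) (h1 s r)
    have h3 : ∀ v : ℝ, G v = ∫ t in (0:ℝ)..v, (lamE t + 1) := by
      intro v
      rw [hG_def]
      rw [intervalIntegral.integral_add (hlamEc.intervalIntegrable 0 v)
        (intervalIntegrable_const (c := (1:ℝ)))]
      simp [hY_def]
    rw [h3 r, h3 s, ← h2]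
    ring
  -- the fundamental identity
  have hw : ∀ r : ℝ, 0 ≤ r →
      (lam r - 1) * E r = (lam 0 - 1) + ∫ t in (0:ℝ)..r, (f t - 1) * E t := by
    intro r hr
    have hd : ∀ t ∈ uIcc 0 r, HasDerivAt (fun t => (lam t - 1) * E t) ((f t - 1) * E t) t := by
      intro t ht
      rw [uIcc_of_le hr] at ht
      have h1 := ((hlam t ht.1).sub_const 1).fun_mul ((hG t).exp)
      have h2 : lamE t = lam t := hlamE_eq t ht.1
      refine h1.congr_deriv ?_
      rw [hE_def]
      simp only [h2]
      ring
    have hint : IntervalIntegrable (fun t => (f t - 1) * E t) volume 0 r :=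
      ((hfint 0 r le_rfl hr).sub (intervalIntegrable_const (c := (1:ℝ)))).mul_continuousOn
        hEc.continuousOn
    have h3 := intervalIntegral.integral_eq_sub_of_hasDerivAt hd hint
    rw [h3, hE0]
    ring
  -- absolute-value estimate
  have hintE : ∀ r : ℝ, 0 ≤ r → IntervalIntegrable (fun t => (f t - 1) * E t) volume 0 r :=
    fun r hr => ((hfint 0 r le_rfl hr).sub (intervalIntegrable_const (c := (1:ℝ)))).mul_continuousOn
      hEc.continuousOn
  have habs : ∀ r : ℝ, 0 ≤ r → |lam r - 1| * E r ≤
      |lam 0 - 1| + J * ∫ t in (0:ℝ)..r, Real.exp (-a * t) * E t := by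
    intro r hr
    have h1 : |lam r - 1| * E r = |(lam r - 1) * E r| := by
      rw [abs_mul, abs_of_pos (hEpos r)]
    rw [h1, hw r hr]
    refine (abs_add_le _ _).trans ?_
    have h2 : |∫ t in (0:ℝ)..r, (f t - 1) * E t| ≤ ∫ t in (0:ℝ)..r, |(f t - 1) * E t| :=
      intervalIntegral.abs_integral_le_integral_abs hr
    have h3 : (∫ t in (0:ℝ)..r, |(f t - 1) * E t|) ≤
        ∫ t in (0:ℝ)..r, J * (Real.exp (-a * t) * E t) := by
      refine intervalIntegral.integral_mono_ae_restrict hr ((hintE r hr).abs) ?_ ?_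
      · have hexp : Continuous fun t : ℝ => Real.exp (-a * t) :=
          Real.continuous_exp.comp (continuous_const.mul continuous_id)
        exact (continuous_const.mul (hexp.mul hEc)).intervalIntegrable 0 r
      · have h4 : ∀ᵐ t ∂(volume.restrict (Icc (0:ℝ) r)), |f t - 1| ≤ J * Real.exp (-a * t) :=
          ae_restrict_of_ae_restrict_of_subset (Icc_subset_Ici_self) hf_close
        filter_upwards [h4] with t ht
        rw [abs_mul, abs_of_pos (hEpos t)]
        calc |f t - 1| * E t ≤ (J * Real.exp (-a * t)) * E t :=
              mul_le_mul_of_nonneg_right ht (hEpos t).le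
        _ = J * (Real.exp (-a * t) * E t) := by ring
    rw [intervalIntegral.integral_const_mul] at h3
    have := h2.trans h3
    linarith [abs_abs (lam 0 - 1)]
  -- the key estimate
  have hexp : Continuous fun t : ℝ => Real.exp (-a * t) :=
    Real.continuous_exp.comp (continuous_const.mul continuous_id)
  have hkey : ∀ c I r : ℝ, 0 ≤ r → 0 ≤ I → c ≤ a →
      (∀ s, 0 ≤ s → s ≤ r → c * (r - s) - I ≤ G r - G s) →
      |lam r - 1| ≤ Real.exp I * (|lam 0 - 1| + J * ∫ s in (0:ℝ)..r, Real.exp ((c - a) * s))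
        * Real.exp (-(c * r)) := by
    intro c I r hr hI hca hlb
    have hEr := hEpos r
    rw [← mul_le_mul_iff_left₀ hEr]
    refine (habs r hr).trans ?_
    set K := Real.exp I * Real.exp (-(c * r)) * E r with hK_def
    have hK1 : 1 ≤ K := by
      have h1 := hlb 0 le_rfl hr
      rw [hG0] at h1
      have h2 : Real.exp (c * r - I) ≤ E r := by
        rw [hE_def]
        exact Real.exp_le_exp.2 (by linarith)
      calc (1:ℝ) = Real.exp I * Real.exp (-(c * r)) * Real.exp (c * r - I) := by
            rw [← Real.exp_add, ← Real.exp_add,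
              show I + -(c * r) + (c * r - I) = 0 by ring, Real.exp_zero]
      _ ≤ K := by
            rw [hK_def]
            exact mul_le_mul_of_nonneg_left h2 (by positivity)
    have hA : (0:ℝ) ≤ |lam 0 - 1| := abs_nonneg _
    have h1 : |lam 0 - 1| ≤ |lam 0 - 1| * K := le_mul_of_one_le_right hA hK1
    have h2 : (∫ t in (0:ℝ)..r, Real.exp (-a * t) * E t) ≤
        (∫ s in (0:ℝ)..r, Real.exp ((c - a) * s)) * K := by
      rw [← intervalIntegral.integral_mul_const]
      refine intervalIntegral.integral_mono_on hr ((hexp.mul hEc).intervalIntegrable 0 r)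
        (((Real.continuous_exp.comp (continuous_const.mul continuous_id)).mul
          continuous_const).intervalIntegrable 0 r) ?_
      intro t htm
      have hE_le : E t ≤ Real.exp I * Real.exp (c * t) * Real.exp (-(c * r)) * E r := by
        have h3 := hlb t htm.1 htm.2
        rw [hE_def]
        calc Real.exp (G t) ≤ Real.exp (G r - c * (r - t) + I) :=
              Real.exp_le_exp.2 (by linarith)
        _ = Real.exp I * Real.exp (c * t) * Real.exp (-(c * r)) * Real.exp (G r) := by
              rw [← Real.exp_add, ← Real.exp_add, ← Real.exp_add]; ring_nf
      calc Real.exp (-a * t) * E t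
          ≤ Real.exp (-a * t) * (Real.exp I * Real.exp (c * t) * Real.exp (-(c * r)) * E r) :=
            mul_le_mul_of_nonneg_left hE_le (Real.exp_pos _).le
      _ = Real.exp ((c - a) * t) * K := by
            simp only [hK_def, hE_def, ← Real.exp_add]
            congr 1
            ring
    have hS0 : (0:ℝ) ≤ ∫ s in (0:ℝ)..r, Real.exp ((c - a) * s) :=
      intervalIntegral.integral_nonneg hr (fun u _ => (Real.exp_pos _).le)
    calc |lam 0 - 1| + J * ∫ t in (0:ℝ)..r, Real.exp (-a * t) * E t
        ≤ |lam 0 - 1| * K + J * ((∫ s in (0:ℝ)..r, Real.exp ((c - a) * s)) * K) :=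
          add_le_add h1 (mul_le_mul_of_nonneg_left h2 hJ.le)
    _ = Real.exp I * (|lam 0 - 1| + J * ∫ s in (0:ℝ)..r, Real.exp ((c - a) * s))
          * Real.exp (-(c * r)) * E r := by rw [hK_def]; ring
  -- pass 1: preliminary decay
  set c1 := min (1 + m) 2 with hc1_def
  have hc11 : 1 < c1 := lt_min (by linarith) one_lt_two
  have hc12 : c1 ≤ 2 := min_le_right _ _
  have hc1m : c1 ≤ 1 + m := min_le_left _ _
  have pass1 : ∀ r : ℝ, 0 ≤ r → |lam r - 1| ≤ (|lam 0 - 1| + J * r) * Real.exp (-(c1 * r)) := by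
    intro r hr
    have hlb : ∀ s, 0 ≤ s → s ≤ r → c1 * (r - s) - 0 ≤ G r - G s := by
      intro s hs hsr
      rw [hGsub s r]
      have h1 : (∫ t in s..r, c1) ≤ ∫ t in s..r, (lamE t + 1) := by
        refine intervalIntegral.integral_mono_on hsr (intervalIntegrable_const)
          ((hlamEc.add continuous_const).intervalIntegrable s r) ?_
        intro t htm
        have h2 := hmlam t (hs.trans htm.1)
        rw [hlamE_eq t (hs.trans htm.1)]
        linarith
      rw [intervalIntegral.integral_const, smul_eq_mul] at h1
      linarith [h1]
    have h := hkey c1 0 r hr le_rfl (by linarith) hlb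
    have hS : (∫ s in (0:ℝ)..r, Real.exp ((c1 - a) * s)) ≤ r := by
      have h2 : (∫ s in (0:ℝ)..r, Real.exp ((c1 - a) * s)) ≤ ∫ s in (0:ℝ)..r, (1:ℝ) := by
        refine intervalIntegral.integral_mono_on hr
          ((Real.continuous_exp.comp (continuous_const.mul continuous_id)).intervalIntegrable 0 r)
          intervalIntegrable_const ?_
        intro t htm
        rw [Real.exp_le_one_iff]
        have : c1 - a ≤ 0 := by linarith
        exact mul_nonpos_of_nonpos_of_nonneg this htm.1
      simpa using h2
    calc |lam r - 1| ≤ Real.exp 0 * (|lam 0 - 1| + J * ∫ s in (0:ℝ)..r, Real.exp ((c1 - a) * s))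
          * Real.exp (-(c1 * r)) := h
    _ ≤ (|lam 0 - 1| + J * r) * Real.exp (-(c1 * r)) := by
          rw [Real.exp_zero, one_mul]
          have hS0 : (0:ℝ) ≤ ∫ s in (0:ℝ)..r, Real.exp ((c1 - a) * s) :=
            intervalIntegral.integral_nonneg hr (fun u _ => (Real.exp_pos _).le)
          have := mul_le_mul_of_nonneg_left hS hJ.le
          nlinarith [Real.exp_pos (-(c1 * r)), abs_nonneg (lam 0 - 1)]
  -- pass 2 lower bound on G increments
  set A := |lam 0 - 1| with hA_def
  have hA0 : 0 ≤ A := abs_nonneg _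
  have hce1 : Continuous fun t : ℝ => Real.exp (-(1 * t)) :=
    Real.continuous_exp.comp (continuous_const.mul continuous_id).neg
  have hce2 : Continuous fun t : ℝ => Real.exp (-(2⁻¹ * t)) :=
    Real.continuous_exp.comp (continuous_const.mul continuous_id).neg
  have hIb : ∀ s r : ℝ, 0 ≤ s → s ≤ r → 2 * (r - s) - (A + 4 * J) ≤ G r - G s := by
    intro s r hs hsr
    rw [hGsub s r]
    have hptw : ∀ t ∈ Icc s r,
        2 - (A * Real.exp (-(1 * t)) + 2 * J * Real.exp (-(2⁻¹ * t))) ≤ lamE t + 1 := by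
      intro t htm
      have ht0 : 0 ≤ t := hs.trans htm.1
      have hp1 := pass1 t ht0
      rw [hlamE_eq t ht0]
      have habs' : -((A + J * t) * Real.exp (-(c1 * t))) ≤ lam t - 1 := by
        have := neg_abs_le (lam t - 1)
        have hp1' : |lam t - 1| ≤ (A + J * t) * Real.exp (-(c1 * t)) := by
          rw [hA_def]; exact hp1
        linarith
      set q := Real.exp (-(2⁻¹ * t)) with hq_def
      have hq : 0 < q := Real.exp_pos _
      have he0 : Real.exp (-(c1 * t)) ≤ Real.exp (-(1 * t)) :=
        Real.exp_le_exp.2 (by nlinarith [mul_nonneg (sub_nonneg.2 hc11.le) ht0])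
      have heq1 : Real.exp (-(1 * t)) = q * q := by
        rw [hq_def, ← Real.exp_add]; congr 1; ring
      have he2 : t * q ≤ 2 := by
        have h3 := Real.add_one_le_exp (2⁻¹ * t)
        have h4 : Real.exp (2⁻¹ * t) * q = 1 := by
          rw [hq_def, ← Real.exp_add, show 2⁻¹ * t + -(2⁻¹ * t) = 0 by ring, Real.exp_zero]
        nlinarith [hq.le]
      rw [heq1] at he0
      have h5 := mul_le_mul_of_nonneg_left he0 hA0
      have h6 := mul_le_mul_of_nonneg_left he0 (mul_nonneg hJ.le ht0)
      have h7 := mul_le_mul_of_nonneg_left he2 (mul_nonneg hJ.le hq.le)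
      have hbd : (A + J * t) * Real.exp (-(c1 * t)) ≤ A * (q * q) + 2 * J * q := by
        linarith [h5, h6, h7]
      rw [heq1]
      linarith [habs', hbd]
    have hInt1 : IntervalIntegrable
        (fun t => A * Real.exp (-(1 * t)) + 2 * J * Real.exp (-(2⁻¹ * t))) volume s r :=
      ((continuous_const.mul hce1).add (continuous_const.mul hce2)).intervalIntegrable s r
    have h1 : (∫ t in s..r, (2 - (A * Real.exp (-(1 * t)) + 2 * J * Real.exp (-(2⁻¹ * t)))))
        ≤ ∫ t in s..r, (lamE t + 1) :=
      intervalIntegral.integral_mono_on hsr ((continuous_const.sub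
        ((continuous_const.mul hce1).add (continuous_const.mul hce2))).intervalIntegrable s r)
        ((hlamEc.add continuous_const).intervalIntegrable s r) hptw
    have h2 : (∫ t in s..r, (2 - (A * Real.exp (-(1 * t)) + 2 * J * Real.exp (-(2⁻¹ * t)))))
        = 2 * (r - s) - (A * ((Real.exp (-(1 * s)) - Real.exp (-(1 * r))) / 1)
          + 2 * J * ((Real.exp (-(2⁻¹ * s)) - Real.exp (-(2⁻¹ * r))) / 2⁻¹)) := by
      rw [intervalIntegral.integral_sub (intervalIntegrable_const) hInt1,
        intervalIntegral.integral_add ((continuous_const.fun_mul hce1).intervalIntegrable s r)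
          ((continuous_const.fun_mul hce2).intervalIntegrable s r),
        intervalIntegral.integral_const_mul, intervalIntegral.integral_const_mul,
        expInt 1 s r one_pos, expInt 2⁻¹ s r (by norm_num),
        intervalIntegral.integral_const, smul_eq_mul]
      ring
    rw [h2] at h1
    have hb1 : Real.exp (-(1 * s)) ≤ 1 := Real.exp_le_one_iff.2 (by nlinarith)
    have hb2 : Real.exp (-(2⁻¹ * s)) ≤ 1 := Real.exp_le_one_iff.2 (by nlinarith)
    have hb3 := Real.exp_pos (-(1 * r))
    have hb4 := Real.exp_pos (-(2⁻¹ * r))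
    have e1 : (Real.exp (-(1 * s)) - Real.exp (-(1 * r))) / 1 ≤ 1 := by
      rw [div_one]; linarith
    have e2 : (Real.exp (-(2⁻¹ * s)) - Real.exp (-(2⁻¹ * r))) / 2⁻¹ ≤ 2 := by
      rw [div_le_iff₀ (by norm_num : (0:ℝ) < 2⁻¹)]; norm_num; linarith
    have h3 := add_le_add (mul_le_mul_of_nonneg_left e1 hA0)
      (mul_le_mul_of_nonneg_left e2 (by linarith : (0:ℝ) ≤ 2 * J))
    linarith [h1, h3]
  -- conclusion
  refine ⟨hpos, Real.exp (A + 4 * J) * (A + J * (a - 2)⁻¹), ?_, ?_⟩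
  · have h1 : 0 < J * (a - 2)⁻¹ := mul_pos hJ (inv_pos.2 (by linarith))
    exact mul_pos (Real.exp_pos _) (by linarith)
  · intro r hr
    have hIb0 : (0:ℝ) ≤ A + 4 * J := by linarith
    have h := hkey 2 (A + 4 * J) r hr.le hIb0 ha.le (fun s hs hsr => hIb s r hs hsr)
    have hS : (∫ s in (0:ℝ)..r, Real.exp ((2 - a) * s)) ≤ (a - 2)⁻¹ := by
      have heq : ∀ t : ℝ, (2 - a) * t = -((a - 2) * t) := fun t => by ring
      simp only [heq]
      rw [expInt (a - 2) 0 r (by linarith)]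
      rw [show -((a - 2) * 0) = 0 by ring, Real.exp_zero]
      have h3 := Real.exp_pos (-((a - 2) * r))
      rw [div_le_iff₀ (by linarith : (0:ℝ) < a - 2)]
      rw [inv_mul_cancel₀ (by linarith : (a - 2) ≠ 0)]
      linarith
    have hS0 : (0:ℝ) ≤ ∫ s in (0:ℝ)..r, Real.exp ((2 - a) * s) :=
      intervalIntegral.integral_nonneg hr.le (fun u _ => (Real.exp_pos _).le)
    calc |lam r - 1| ≤ Real.exp (A + 4 * J)
          * (A + J * ∫ s in (0:ℝ)..r, Real.exp ((2 - a) * s)) * Real.exp (-(2 * r)) := h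
    _ ≤ Real.exp (A + 4 * J) * (A + J * (a - 2)⁻¹) * Real.exp (-(2 * r)) := by
          have h4 := mul_le_mul_of_nonneg_left hS hJ.le
          refine mul_le_mul_of_nonneg_right ?_ (Real.exp_pos _).le
          refine mul_le_mul_of_nonneg_left ?_ (Real.exp_pos _).le
          linarith
    _ = Real.exp (A + 4 * J) * (A + J * (a - 2)⁻¹) * Real.exp (-2 * r) := by
          rw [show -(2 * r) = -2 * r by ring]
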